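/- Fix η ∈ (0, 1/4] and r ≤ 1 + η/4, r ≥ 0. Define in the variable w: f(w) = w[1 + 2η + 2w²(1 - w - ηr) + (w - 1)(w + η(2 - r))²] and g(w) = (1 + w²(1 - w - ηr))(w + η(2 - r)). Then for all w ∈ [1 - η, 1], d/dw (f(w) - g(w)) = η[η(2 - r)(r - 2 + 4w) + 6(3 - 2r)w² + 6(r - 2)w + 2] ≥ 0. -/

import Mathlib

lemma cubic_deriv (a b c d x : ℝ) :
    HasDerivAt (fun x : ℝ => a*x^3 + b*x^2 + c*x + d) (3*a*x^2 + 2*b*x + c) x := by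
  have h3 := (hasDerivAt_pow 3 x).const_mul a
  have h2 := (hasDerivAt_pow 2 x).const_mul b
  have h1 := (hasDerivAt_id x).const_mul c
  have h := ((h3.add h2).add h1).add_const d
  convert h using 1
  · rfl
  · rfl
  · funext y; simp only [Pi.add_apply, id]
  · norm_num; ring

theorem stmt_16 (η r : ℝ) (hη : 0 < η) (hη' : η ≤ 1/4) (hr0 : 0 ≤ r) (hr : r ≤ 1 + η/4) :
    ∀ w ∈ Set.Icc (1 - η) 1,
      HasDerivAt (fun w : ℝ =>
          w * (1 + 2*η + 2*w^2*(1 - w - η*r) + (w - 1)*(w + η*(2 - r))^2)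
          - (1 + w^2*(1 - w - η*r)) * (w + η*(2 - r)))
        (η * (η*(2 - r)*(r - 2 + 4*w) + 6*(3 - 2*r)*w^2 + 6*(r - 2)*w + 2)) w ∧
      0 ≤ η * (η*(2 - r)*(r - 2 + 4*w) + 6*(3 - 2*r)*w^2 + 6*(r - 2)*w + 2) := by
  intro w hw
  obtain ⟨hw1, hw2⟩ := hw
  constructor
  · have h := cubic_deriv (3*(η*(2-r)) - η*r)
      ((η*(2-r))^2 - 3*(η*(2-r)) + η*r*(η*(2-r)))
      (2*η - (η*(2-r))^2) (-(η*(2-r))) w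
    have heq : (fun w : ℝ =>
          w * (1 + 2*η + 2*w^2*(1 - w - η*r) + (w - 1)*(w + η*(2 - r))^2)
          - (1 + w^2*(1 - w - η*r)) * (w + η*(2 - r)))
        = fun x : ℝ => (3*(η*(2-r)) - η*r)*x^3 +
            ((η*(2-r))^2 - 3*(η*(2-r)) + η*r*(η*(2-r)))*x^2 +
            (2*η - (η*(2-r))^2)*x + (-(η*(2-r))) := by
      funext x; ring
    rw [heq]
    convert h using 1
    ring
  · have h1 : (0:ℝ) ≤ 2 - r := by nlinarith
    have h2 : (0:ℝ) ≤ 3 - 2*r := by nlinarith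
    apply mul_nonneg hη.le
    nlinarith [sq_nonneg (w - 1), sq_nonneg w, sq_nonneg (2 - r), mul_nonneg h1 (sub_nonneg.2 hw1), sq_nonneg (w - (2-r)/3), mul_nonneg hη.le h1, sq_nonneg (1 - w)]
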